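/- Let (𝔫, ⟨·,·⟩) be a 2-step nilpotent metric Lie algebra with center z(𝔫) and 𝔳 = z(𝔫)^⊥, and let T be a skew-symmetric endomorphism of 𝔫. Then T is a Killing-Yano tensor if and only if T maps z(𝔫) into z(𝔫) and for all x, y ∈ 𝔳 one has [Tx, y] = [x, Ty] and T[x, y] = 3[Tx, y]. -/

import Mathlib

section Defs

variable {g : Type*} [LieRing g] [LieAlgebra ℝ g]

/-- `B` is a (positive definite) inner product on the real Lie algebra `g`,
given as a bilinear form. -/
structure IsInnerProduct (B : g →ₗ[ℝ] g →ₗ[ℝ] ℝ) : Prop where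
  symm : ∀ x y : g, B x y = B y x
  posdef : ∀ x : g, x ≠ 0 → 0 < B x x

/-- The Koszul formula characterizing the Levi-Civita connection of the metric Lie
algebra `(g, B)`: `2⟨∇ₓy, z⟩ = ⟨[x,y], z⟩ − ⟨[y,z], x⟩ + ⟨[z,x], y⟩`. -/
def IsLeviCivita (B : g →ₗ[ℝ] g →ₗ[ℝ] ℝ) (D : g → g → g) : Prop :=
  ∀ x y z : g, 2 * B (D x y) z = B ⁅x, y⁆ z - B ⁅y, z⁆ x + B ⁅z, x⁆ y

/-- A skew-symmetric endomorphism with respect to `B`. -/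
def IsSkewSymmetric (B : g →ₗ[ℝ] g →ₗ[ℝ] ℝ) (T : g →ₗ[ℝ] g) : Prop :=
  ∀ x y : g, B (T x) y = - B x (T y)

/-- The conformal Killing-Yano equation for an endomorphism `T` with associated 1-form `θ`:
`⟨(∇ₓT)y, z⟩ + ⟨(∇_yT)x, z⟩ = 2⟨x,y⟩θ(z) − ⟨y,z⟩θ(x) − ⟨x,z⟩θ(y)`,
where `(∇ₓT)y = ∇ₓ(Ty) − T(∇ₓy)`. -/
def IsCKYWith (B : g →ₗ[ℝ] g →ₗ[ℝ] ℝ) (D : g → g → g) (T : g →ₗ[ℝ] g)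
    (θ : g →ₗ[ℝ] ℝ) : Prop :=
  ∀ x y z : g,
    B (D x (T y) - T (D x y)) z + B (D y (T x) - T (D y x)) z =
      2 * B x y * θ z - B y z * θ x - B x z * θ y

/-- A Killing-Yano tensor is a CKY tensor with `θ = 0`. -/
def IsKY (B : g →ₗ[ℝ] g →ₗ[ℝ] ℝ) (D : g → g → g) (T : g →ₗ[ℝ] g) : Prop :=
  IsCKYWith B D T 0

/-- A parallel tensor: `(∇ₓT)y = 0` for all `x, y`. -/
def IsParallelT (D : g → g → g) (T : g →ₗ[ℝ] g) : Prop :=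
  ∀ x y : g, D x (T y) - T (D x y) = 0

/-- The orthogonal complement of a submodule with respect to the bilinear form `B`. -/
def orthComp (B : g →ₗ[ℝ] g →ₗ[ℝ] ℝ) (p : Submodule ℝ g) : Submodule ℝ g where
  carrier := {x : g | ∀ y ∈ p, B x y = 0}
  add_mem' := by
    intro a b ha hb y hy
    simp only [map_add, LinearMap.add_apply, ha y hy, hb y hy, add_zero]
  zero_mem' := by
    intro y hy
    simp
  smul_mem' := by
    intro c a ha y hy
    simp only [map_smul, LinearMap.smul_apply, ha y hy, smul_eq_mul, mul_zero]

end Defs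

section Aux

variable {n : Type*} [LieRing n] [LieAlgebra ℝ n]

/-- KY is equivalent to a purely algebraic trilinear identity. -/
private lemma ky_iff_alg (B : n →ₗ[ℝ] n →ₗ[ℝ] ℝ)
    (D : n → n → n) (hD : IsLeviCivita B D)
    (T : n →ₗ[ℝ] n) (hT : IsSkewSymmetric B T) :
    IsKY B D T ↔ ∀ x y z : n,
      (B ⁅x, T y⁆ z - B ⁅T y, z⁆ x + B ⁅z, x⁆ (T y))
      + (B ⁅x, y⁆ (T z) - B ⁅y, T z⁆ x + B ⁅T z, x⁆ y)
      + (B ⁅y, T x⁆ z - B ⁅T x, z⁆ y + B ⁅z, y⁆ (T x))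
      + (B ⁅y, x⁆ (T z) - B ⁅x, T z⁆ y + B ⁅T z, y⁆ x) = 0 := by
  have key : ∀ x y z : n,
      2 * (B (D x (T y) - T (D x y)) z + B (D y (T x) - T (D y x)) z) =
      (B ⁅x, T y⁆ z - B ⁅T y, z⁆ x + B ⁅z, x⁆ (T y))
      + (B ⁅x, y⁆ (T z) - B ⁅y, T z⁆ x + B ⁅T z, x⁆ y)
      + (B ⁅y, T x⁆ z - B ⁅T x, z⁆ y + B ⁅z, y⁆ (T x))
      + (B ⁅y, x⁆ (T z) - B ⁅x, T z⁆ y + B ⁅T z, y⁆ x) := by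
    intro x y z
    have h1 := hD x (T y) z
    have h2 := hD x y (T z)
    have h3 := hD y (T x) z
    have h4 := hD y x (T z)
    have s1 := hT (D x y) z
    have s2 := hT (D y x) z
    simp only [map_sub, LinearMap.sub_apply] at *
    linarith
  constructor
  · intro h x y z
    have h0 := h x y z
    simp only [LinearMap.zero_apply, mul_zero, zero_mul, sub_zero] at h0
    rw [← key x y z, h0, mul_zero]
  · intro h x y z
    have h0 := key x y z
    rw [h x y z] at h0
    simp only [LinearMap.zero_apply, mul_zero, zero_mul, sub_zero]
    linarith

end Aux

/-- On a 2-step nilpotent metric Lie algebra `(𝔫, B)` with `𝔳 = z(𝔫)^⊥`, a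
skew-symmetric endomorphism `T` is Killing-Yano iff `T` preserves the center and
`[Tx, y] = [x, Ty]` and `T[x, y] = 3[Tx, y]` for all `x, y ∈ 𝔳`. -/
theorem two_step_ky_characterization {n : Type*} [LieRing n] [LieAlgebra ℝ n]
    [FiniteDimensional ℝ n]
    (B : n →ₗ[ℝ] n →ₗ[ℝ] ℝ) (hB : IsInnerProduct B)
    (hnonab : ∃ x y : n, ⁅x, y⁆ ≠ 0)
    (h2step : ∀ x y z : n, ⁅x, ⁅y, z⁆⁆ = 0)
    (D : n → n → n) (hD : IsLeviCivita B D)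
    (T : n →ₗ[ℝ] n) (hT : IsSkewSymmetric B T) :
    IsKY B D T ↔
      ((∀ z ∈ LieAlgebra.center ℝ n, T z ∈ LieAlgebra.center ℝ n) ∧
       (∀ x ∈ orthComp B (LieAlgebra.center ℝ n).toSubmodule,
        ∀ y ∈ orthComp B (LieAlgebra.center ℝ n).toSubmodule,
          ⁅T x, y⁆ = ⁅x, T y⁆ ∧ T ⁅x, y⁆ = (3 : ℝ) • ⁅T x, y⁆)) := by
  classical
  -- basic facts
  have hcent : ∀ x : n, x ∈ LieAlgebra.center ℝ n ↔ ∀ y : n, ⁅y, x⁆ = 0 := fun x =>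
    LieModule.mem_maxTrivSubmodule ℝ n n x
  have hbrZ : ∀ x y : n, ⁅x, y⁆ ∈ LieAlgebra.center ℝ n := fun x y =>
    (hcent _).mpr fun w => h2step w x y
  -- brackets with central elements vanish (both sides)
  have hlz : ∀ {c : n}, c ∈ LieAlgebra.center ℝ n → ∀ w : n, ⁅c, w⁆ = 0 := by
    intro c hc w
    rw [← lie_skew, (hcent c).mp hc w, neg_zero]
  have hrz : ∀ {c : n}, c ∈ LieAlgebra.center ℝ n → ∀ w : n, ⁅w, c⁆ = 0 := fun hc w =>
    (hcent _).mp hc w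
  -- an element of the center orthogonal to the center is zero
  have hnz : ∀ u : n, u ∈ LieAlgebra.center ℝ n → (∀ d ∈ LieAlgebra.center ℝ n, B u d = 0)
      → u = 0 := by
    intro u hu h
    by_contra hne
    exact absurd (h u hu) (ne_of_gt (hB.posdef u hne))
  rw [ky_iff_alg B D hD T hT]
  constructor
  · -- forward direction
    intro hE
    -- Step 1: T preserves the center
    have hTZ : ∀ c ∈ LieAlgebra.center ℝ n, T c ∈ LieAlgebra.center ℝ n := by
      have e0 : ∀ x : n, ∀ c ∈ LieAlgebra.center ℝ n, ∀ d ∈ LieAlgebra.center ℝ n,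
          B ⁅x, T d⁆ c = 2 * B ⁅x, T c⁆ d := by
        intro x c hc d hd
        have h0 := hE x d c
        rw [hrz hc (T d), hlz hc x, hrz hd x, hlz hd (T c), hlz hd (T x), hrz hc (T x),
          hlz hc d, hlz hd x, hrz hd (T c)] at h0
        have hsk : ⁅T c, x⁆ = -⁅x, T c⁆ := by rw [← lie_skew]
        rw [hsk] at h0
        simp only [map_zero, LinearMap.zero_apply, map_neg, LinearMap.neg_apply] at h0
        linarith
      intro c hc
      rw [hcent]
      intro x
      have key : ∀ d ∈ LieAlgebra.center ℝ n, B ⁅x, T c⁆ d = 0 := by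
        intro d hd
        have e1 := e0 x c hc d hd
        have e2 := e0 x d hd c hc
        linarith
      exact hnz ⁅x, T c⁆ (hbrZ _ _) key
    -- Step 2: the first relation, globally
    have hrel1 : ∀ x y : n, ⁅T x, y⁆ = ⁅x, T y⁆ := by
      intro x y
      have key : ∀ c ∈ LieAlgebra.center ℝ n, B (⁅x, T y⁆ + ⁅y, T x⁆) c = 0 := by
        intro c hc
        have hTc := hTZ c hc
        have h0 := hE x y c
        rw [hrz hc (T y), hlz hc x, hrz hTc y, hlz hTc x, hrz hc (T x), hlz hc y,
          hrz hTc x, hlz hTc y] at h0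
        have hsk : ⁅y, x⁆ = -⁅x, y⁆ := by rw [← lie_skew]
        rw [hsk] at h0
        simp only [map_zero, LinearMap.zero_apply, map_neg, LinearMap.neg_apply, map_add,
          LinearMap.add_apply] at h0 ⊢
        linarith
      have h0 := hnz _ (add_mem (hbrZ x (T y)) (hbrZ y (T x))) key
      have h1 : ⁅x, T y⁆ = -⁅y, T x⁆ := eq_neg_of_add_eq_zero_left h0
      rw [h1, lie_skew]
    -- Step 3: the second relation, globally
    have hrel3 : ∀ x w : n, T ⁅x, w⁆ = (3 : ℝ) • ⁅T x, w⁆ := by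
      intro x w
      have hmem : T ⁅x, w⁆ - (3 : ℝ) • ⁅T x, w⁆ ∈ LieAlgebra.center ℝ n :=
        sub_mem (hTZ _ (hbrZ x w)) (Submodule.smul_mem _ _ (hbrZ (T x) w))
      have key : ∀ d ∈ LieAlgebra.center ℝ n,
          B (T ⁅x, w⁆ - (3 : ℝ) • ⁅T x, w⁆) d = 0 := by
        intro d hd
        have hTd := hTZ d hd
        have h0 := hE x d w
        rw [hrz hTd x, hlz hTd w, hrz hd x, hlz hd (T w), hlz hd (T x), hrz hd w,
          hlz hd x, hrz hd (T w)] at h0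
        -- remaining: B ⁅w,x⁆ (T d) + B ⁅T w, x⁆ d - B ⁅T x, w⁆ d - B ⁅x, T w⁆ d = 0
        have s1 : B (T ⁅w, x⁆) d = - B ⁅w, x⁆ (T d) := hT ⁅w, x⁆ d
        have e1 : ⁅w, x⁆ = -⁅x, w⁆ := by rw [← lie_skew]
        have e2 : ⁅T w, x⁆ = -⁅T x, w⁆ := by rw [hrel1 w x, ← lie_skew, hrel1 x w]
        have e3 : ⁅x, T w⁆ = ⁅T x, w⁆ := (hrel1 x w).symm
        rw [e1, e2, e3] at h0
        rw [e1] at s1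
        simp only [map_zero, LinearMap.zero_apply, map_neg, LinearMap.neg_apply,
          map_sub, LinearMap.sub_apply, map_smul, LinearMap.smul_apply, smul_eq_mul] at h0 s1 ⊢
        linarith
      have h0 := hnz _ hmem key
      have := sub_eq_zero.mp h0
      exact this
    exact ⟨hTZ, fun x _ y _ => ⟨hrel1 x y, hrel3 x y⟩⟩
  · -- backward direction
    rintro ⟨hTZ, hrel⟩
    -- decomposition n = V + Z
    set Z := (LieAlgebra.center ℝ n).toSubmodule with hZdef
    have hrefl : B.IsRefl := fun x y h => by rw [hB.symm]; exact h
    have hres : (LinearMap.BilinForm.restrict B Z).Nondegenerate := by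
      constructor <;> intro m hm <;>
      · have h1 := hm m
        rw [LinearMap.BilinForm.restrict_apply] at h1
        by_contra hne
        have h2 : (m : n) ≠ 0 := fun h => hne (Subtype.ext h)
        exact absurd h1 (ne_of_gt (hB.posdef _ h2))
    have hcompl := LinearMap.BilinForm.isCompl_orthogonal_of_restrict_nondegenerate
      (B := B) (W := Z) hrefl hres
    have hdec : ∀ x : n, ∃ a ∈ orthComp B Z, ∃ c ∈ LieAlgebra.center ℝ n, x = a + c := by
      intro x
      have hx : x ∈ Z ⊔ LinearMap.BilinForm.orthogonal B Z := by
        rw [hcompl.sup_eq_top]; trivial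
      obtain ⟨c, hc, a, ha, h⟩ := Submodule.mem_sup.mp hx
      refine ⟨a, fun y hy => hrefl y a (ha y hy), c, hc, by rw [← h]; abel⟩
    -- globalize the two relations
    have hrel1 : ∀ x y : n, ⁅T x, y⁆ = ⁅x, T y⁆ := by
      intro x y
      obtain ⟨a, ha, c, hc, hx⟩ := hdec x
      obtain ⟨b, hb, d, hdZ, hy⟩ := hdec y
      have h1 : ⁅T x, y⁆ = ⁅T a, b⁆ := by
        rw [hx, hy]
        simp only [map_add, add_lie, lie_add]
        rw [hlz (hTZ c hc) b, hlz (hTZ c hc) d, hrz hdZ (T a)]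
        abel
      have h2 : ⁅x, T y⁆ = ⁅a, T b⁆ := by
        rw [hx, hy]
        simp only [map_add, add_lie, lie_add]
        rw [hrz (hTZ d hdZ) a, hlz hc (T b), hlz hc (T d)]
        abel
      rw [h1, h2, (hrel a ha b hb).1]
    have hrel3 : ∀ x y : n, T ⁅x, y⁆ = (3 : ℝ) • ⁅T x, y⁆ := by
      intro x y
      obtain ⟨a, ha, c, hc, hx⟩ := hdec x
      obtain ⟨b, hb, d, hdZ, hy⟩ := hdec y
      have h1 : ⁅T x, y⁆ = ⁅T a, b⁆ := by
        rw [hx, hy]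
        simp only [map_add, add_lie, lie_add]
        rw [hlz (hTZ c hc) b, hlz (hTZ c hc) d, hrz hdZ (T a)]
        abel
      have h2 : ⁅x, y⁆ = ⁅a, b⁆ := by
        rw [hx, hy]
        simp only [add_lie, lie_add]
        rw [hlz hc b, hlz hc d, hrz hdZ a]
        abel
      rw [h1, h2, (hrel a ha b hb).2]
    -- verify the algebraic identity
    intro x y z
    have e1 : B ⁅x, T y⁆ z = B ⁅T x, y⁆ z := by rw [hrel1]
    have e2 : B ⁅y, T x⁆ z = - B ⁅T x, y⁆ z := by
      rw [show ⁅y, T x⁆ = -⁅T x, y⁆ from (lie_skew _ _).symm, map_neg, LinearMap.neg_apply]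
    have e3 : B ⁅z, x⁆ (T y) = 3 * B ⁅T x, z⁆ y := by
      have s : B (T ⁅z, x⁆) y = - B ⁅z, x⁆ (T y) := hT _ _
      have h1 : T ⁅z, x⁆ = (3 : ℝ) • ⁅T z, x⁆ := hrel3 z x
      have h2 : ⁅T z, x⁆ = -⁅T x, z⁆ := by rw [hrel1 z x, ← lie_skew, hrel1 x z]
      rw [h1, h2] at s
      simp only [smul_neg, map_neg, map_smul, LinearMap.neg_apply, LinearMap.smul_apply,
        smul_eq_mul] at s
      linarith
    have e4 : B ⁅z, y⁆ (T x) = 3 * B ⁅T y, z⁆ x := by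
      have s : B (T ⁅z, y⁆) x = - B ⁅z, y⁆ (T x) := hT _ _
      have h1 : T ⁅z, y⁆ = (3 : ℝ) • ⁅T z, y⁆ := hrel3 z y
      have h2 : ⁅T z, y⁆ = -⁅T y, z⁆ := by rw [hrel1 z y, ← lie_skew, hrel1 y z]
      rw [h1, h2] at s
      simp only [smul_neg, map_neg, map_smul, LinearMap.neg_apply, LinearMap.smul_apply,
        smul_eq_mul] at s
      linarith
    have e5 : B ⁅y, x⁆ (T z) = - B ⁅x, y⁆ (T z) := by
      rw [show ⁅y, x⁆ = -⁅x, y⁆ from (lie_skew _ _).symm, map_neg, LinearMap.neg_apply]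
    have e6 : B ⁅y, T z⁆ x = B ⁅T y, z⁆ x := by rw [hrel1]
    have e7 : B ⁅x, T z⁆ y = B ⁅T x, z⁆ y := by rw [hrel1]
    have e8 : B ⁅T z, x⁆ y = - B ⁅T x, z⁆ y := by
      rw [show ⁅T z, x⁆ = -⁅T x, z⁆ by rw [hrel1 z x, ← lie_skew, hrel1 x z], map_neg,
        LinearMap.neg_apply]
    have e9 : B ⁅T z, y⁆ x = - B ⁅T y, z⁆ x := by
      rw [show ⁅T z, y⁆ = -⁅T y, z⁆ by rw [hrel1 z y, ← lie_skew, hrel1 y z], map_neg,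
        LinearMap.neg_apply]
    rw [e1, e2, e3, e4, e5, e6, e7, e8, e9]
    ring
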